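/- arXiv:2308.16873 — 3 statements merged into one kernel-verified Lean document; each statement's English description precedes it below -/
import Mathlib

section
/- If g: [0, R+Δ] → ℝ is a smooth function that together with all its derivatives vanishes at both endpoints 0 and R+Δ, and g(Eᵢ − E₀) = 1/(E₀ − Eᵢ) for every excited eigenvalue Eᵢ of H (with E₁ − E₀ ≥ Δ and E_{D−1} − E₀ ≤ R) and g(0) = 0, then the reduced resolvent satisfies R₀ = ∑_{n∈ℤ} βₙ e^{iE₀tₙ} U(tₙ), where tₙ = 2πn/(R+Δ), U(t) = e^{−iHt}, and βₙ are the Fourier coefficients of the (R+Δ)-periodic extension of g, provided the Fourier series of g converges pointwise to g on [0, R+Δ]. -/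
open Real MeasureTheory

theorem stmt_1 (D : ℕ)
    (H R₀ : EuclideanSpace ℂ (Fin D) →ₗ[ℂ] EuclideanSpace ℂ (Fin D))
    (U : ℝ → (EuclideanSpace ℂ (Fin D) →ₗ[ℂ] EuclideanSpace ℂ (Fin D)))
    (b : OrthonormalBasis (Fin D) ℂ (EuclideanSpace ℂ (Fin D)))
    (Evals : Fin D → ℝ) (i0 : Fin D) (Δ R : ℝ)
    (g : ℝ → ℝ) (β : ℤ → ℂ) (t : ℤ → ℝ)
    (hΔ : 0 < Δ) (hR : Δ ≤ R)
    (hHsym : H.IsSymmetric)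
    (hEig : ∀ i, H (b i) = (Evals i : ℂ) • b i)
    (hgap : ∀ i, i ≠ i0 → Δ ≤ Evals i - Evals i0)
    (hrange : ∀ i, Evals i - Evals i0 ≤ R)
    (hU : ∀ (s : ℝ) (i : Fin D), U s (b i) = Complex.exp (-(Complex.I) * (Evals i) * s) • b i)
    (hR₀ : ∀ x, R₀ x = ∑ i ∈ Finset.univ.erase i0,
      (((Evals i0 : ℂ) - (Evals i : ℂ))⁻¹ * (inner ℂ (b i) x : ℂ)) • b i)
    (hg_smooth : ContDiff ℝ (⊤ : ℕ∞) g)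
    (hg0 : ∀ n : ℕ, iteratedDeriv n g 0 = 0)
    (hgend : ∀ n : ℕ, iteratedDeriv n g (R + Δ) = 0)
    (hgval : ∀ i, i ≠ i0 → g (Evals i - Evals i0) = (Evals i0 - Evals i)⁻¹)
    (hgzero : g 0 = 0)
    (ht : ∀ n : ℤ, t n = 2 * π * n / (R + Δ))
    (hβ : ∀ n : ℤ, β n = ((R + Δ)⁻¹ : ℂ) * ∫ x in (0:ℝ)..(R + Δ),
      (g x : ℂ) * Complex.exp (Complex.I * x * t n))
    (hconv : ∀ x ∈ Set.Icc (0:ℝ) (R + Δ),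
      HasSum (fun n : ℤ => β n * Complex.exp (-(Complex.I) * x * t n)) ((g x : ℝ) : ℂ)) :
    ∀ ψ, HasSum (fun n : ℤ =>
      (β n * Complex.exp (Complex.I * (Evals i0) * t n)) • U (t n) ψ) (R₀ ψ) := by
  intro ψ
  have hmem : ∀ i : Fin D, (Evals i - Evals i0) ∈ Set.Icc (0:ℝ) (R + Δ) := by
    intro i
    by_cases h : i = i0
    · subst h; constructor <;> simp <;> linarith
    · exact ⟨by linarith [hgap i h], by linarith [hrange i]⟩
  have hexp : ∀ (n : ℤ) (i : Fin D),
      Complex.exp (Complex.I * (Evals i0) * t n) *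
        Complex.exp (-(Complex.I) * (Evals i) * t n)
      = Complex.exp (-(Complex.I) * ((Evals i - Evals i0 : ℝ) : ℂ) * t n) := by
    intro n i
    rw [← Complex.exp_add]
    congr 1
    push_cast
    ring
  have hUψ : ∀ s : ℝ, U s ψ = ∑ i, (inner ℂ (b i) ψ : ℂ) •
      (Complex.exp (-(Complex.I) * (Evals i) * s) • b i) := by
    intro s
    conv_lhs => rw [← b.sum_repr ψ]
    rw [map_sum]
    refine Finset.sum_congr rfl fun i _ => ?_
    rw [LinearMap.map_smul, hU s i, b.repr_apply_apply]
  have key : ∀ i : Fin D, HasSum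
      (fun n : ℤ => (β n * Complex.exp (-(Complex.I) * ((Evals i - Evals i0 : ℝ) : ℂ) * t n) *
        (inner ℂ (b i) ψ : ℂ)) • b i)
      ((((g (Evals i - Evals i0) : ℝ) : ℂ) * (inner ℂ (b i) ψ : ℂ)) • b i) :=
    fun i => ((hconv _ (hmem i)).mul_right (inner ℂ (b i) ψ : ℂ)).smul_const (b i)
  have total := hasSum_sum (s := (Finset.univ : Finset (Fin D)))
    (f := fun i (n : ℤ) => (β n * Complex.exp (-(Complex.I) * ((Evals i - Evals i0 : ℝ) : ℂ) * t n) *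
        (inner ℂ (b i) ψ : ℂ)) • b i)
    (a := fun i => (((g (Evals i - Evals i0) : ℝ) : ℂ) * (inner ℂ (b i) ψ : ℂ)) • b i)
    (fun i _ => key i)
  have heq1 : (fun n : ℤ => ∑ i, (β n * Complex.exp (-(Complex.I) * ((Evals i - Evals i0 : ℝ) : ℂ) * t n) *
        (inner ℂ (b i) ψ : ℂ)) • b i)
      = fun n : ℤ => (β n * Complex.exp (Complex.I * (Evals i0) * t n)) • U (t n) ψ := by
    funext n
    rw [hUψ, Finset.smul_sum]
    refine Finset.sum_congr rfl fun i _ => ?_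
    rw [smul_smul, smul_smul]
    congr 1
    rw [← hexp n i]
    ring
  have heq2 : (∑ i, (((g (Evals i - Evals i0) : ℝ) : ℂ) * (inner ℂ (b i) ψ : ℂ)) • b i)
      = R₀ ψ := by
    rw [hR₀, ← Finset.sum_erase_add _ _ (Finset.mem_univ i0)]
    have h0 : (((g (Evals i0 - Evals i0) : ℝ) : ℂ) * (inner ℂ (b i0) ψ : ℂ)) • b i0 = 0 := by
      rw [sub_self, hgzero]; simp
    rw [h0, add_zero]
    refine Finset.sum_congr rfl fun i hi => ?_
    have hi' : i ≠ i0 := Finset.ne_of_mem_erase hi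
    rw [hgval i hi']
    congr 2
    push_cast
    ring
  rw [heq1, heq2] at total
  exact total
end

section
/- Suppose a sequence (β_n)_{n∈ℤ} satisfies, for all ℓ ≥ 0, |β_n| ≤ (8c R/Δ²)·(64Rℓ²/(Δ|n|))^ℓ for n ≠ 0, and |β_n| ≤ 4/Δ for all n, where c ≈ 7.514 and R ≥ Δ > 0. Then for all n ∈ ℤ, |β_n| ≤ (61R/Δ²)·2^{−√(|n|Δ/(256R))}. -/
theorem stmt_7 (Δ R c : ℝ) (hΔ : 0 < Δ) (hR : Δ ≤ R) (hc : c = 7.514)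
    (β : ℤ → ℂ)
    (hβ1 : ∀ (l : ℕ) (n : ℤ), n ≠ 0 →
      ‖β n‖ ≤ (8 * c * R / Δ ^ 2) * (64 * R * (l : ℝ) ^ 2 / (Δ * |(n : ℝ)|)) ^ l)
    (hβ2 : ∀ n : ℤ, ‖β n‖ ≤ 4 / Δ) :
    ∀ n : ℤ, ‖β n‖ ≤ (61 * R / Δ ^ 2) *
      (2 : ℝ) ^ (-(Real.sqrt (|(n : ℝ)| * Δ / (256 * R)))) := by
  subst hc
  intro n
  have hR0 : 0 < R := lt_of_lt_of_le hΔ hR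
  set x := Real.sqrt (|(n : ℝ)| * Δ / (256 * R)) with hxdef
  have hx0 : 0 ≤ x := Real.sqrt_nonneg _
  by_cases hsmall : x ≤ 3
  · have h8 : (2:ℝ) ^ (-(3:ℝ)) = 1/8 := by
      rw [show ((-3:ℝ)) = ((-3:ℤ):ℝ) by norm_num, Real.rpow_intCast]
      norm_num
    have h1 : (1:ℝ)/8 ≤ (2:ℝ) ^ (-x) := by
      rw [← h8]
      exact (Real.rpow_le_rpow_left_iff one_lt_two).2 (by linarith)
    have h2 : (4:ℝ) / Δ ≤ (61 * R / Δ ^ 2) * (1/8) := by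
      have h3 : (61 * R / Δ ^ 2) * (1/8) = 61 * R / (8 * Δ ^ 2) := by ring
      rw [h3, div_le_div_iff₀ hΔ (by positivity)]
      nlinarith
    calc ‖β n‖ ≤ 4 / Δ := hβ2 n
      _ ≤ (61 * R / Δ ^ 2) * (1/8) := h2
      _ ≤ (61 * R / Δ ^ 2) * (2:ℝ) ^ (-x) :=
          mul_le_mul_of_nonneg_left h1 (by positivity)
  · push_neg at hsmall
    have hn : n ≠ 0 := by
      intro h
      subst h
      have : x = 0 := by simp [hxdef]
      linarith
    have habs : 0 < |(n : ℝ)| := abs_pos.2 (by exact_mod_cast hn)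
    set l := ⌈x⌉₊ with hldef
    have hl1 : x ≤ (l : ℝ) := Nat.le_ceil x
    have hl2 : (l : ℝ) ≤ x + 1 := (Nat.ceil_lt_add_one hx0).le
    have hxsq : x ^ 2 = |(n : ℝ)| * Δ / (256 * R) := Real.sq_sqrt (by positivity)
    have hbase0 : (0:ℝ) ≤ 64 * R * (l : ℝ) ^ 2 / (Δ * |(n : ℝ)|) := by positivity
    have hbase : 64 * R * (l : ℝ) ^ 2 / (Δ * |(n : ℝ)|) ≤ 1/2 := by
      rw [div_le_iff₀ (by positivity)]
      have h2 : (l : ℝ) ^ 2 ≤ 2 * x ^ 2 := by nlinarith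
      rw [hxsq] at h2
      have h3 := mul_le_mul_of_nonneg_left h2 (by positivity : (0:ℝ) ≤ 64 * R)
      have h4 : 64 * R * (2 * (|(n : ℝ)| * Δ / (256 * R))) = 1/2 * (Δ * |(n : ℝ)|) := by
        field_simp
        ring
      linarith [h4 ▸ h3]
    have hpow : ((1:ℝ)/2) ^ l ≤ (2:ℝ) ^ (-x) := by
      have heq : ((1:ℝ)/2) ^ l = (2:ℝ) ^ (-(l:ℝ)) := by
        rw [Real.rpow_neg (by norm_num), Real.rpow_natCast]
        simp [one_div, inv_pow]
      rw [heq]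
      exact (Real.rpow_le_rpow_left_iff one_lt_two).2 (by linarith)
    calc ‖β n‖ ≤ (8 * 7.514 * R / Δ ^ 2) * (64 * R * (l : ℝ) ^ 2 / (Δ * |(n : ℝ)|)) ^ l :=
          hβ1 l n hn
      _ ≤ (8 * 7.514 * R / Δ ^ 2) * ((1:ℝ)/2) ^ l := by
          exact mul_le_mul_of_nonneg_left (pow_le_pow_left₀ hbase0 hbase l) (by positivity)
      _ ≤ (61 * R / Δ ^ 2) * ((1:ℝ)/2) ^ l := by
          apply mul_le_mul_of_nonneg_right _ (by positivity)
          apply div_le_div_of_nonneg_right _ (by positivity) -- maybe wrong name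
          nlinarith
      _ ≤ (61 * R / Δ ^ 2) * (2:ℝ) ^ (-x) :=
          mul_le_mul_of_nonneg_left hpow (by positivity)
end

section
/- Let H be Hermitian with unique ground state |Φ₀⟩ and reduced resolvent R₀, and suppose R₀ = ∑_{n∈ℤ} βₙ e^{iE₀tₙ}U(tₙ) with |βₙ| ≤ M e^{−q√|n|} for constants M, q > 0, where U(t) = e^{−iHt}. Let V be Hermitian with ‖V|Φ₀⟩‖ ≤ v. Then for the truncation R_{0,N} = ∑_{|n|≤N} βₙ e^{iE₀tₙ}U(tₙ), the truncation error satisfies |⟨Φ₀|VR₀V|Φ₀⟩ − ⟨Φ₀|VR_{0,N}V|Φ₀⟩| ≤ v²·(8M/q²)·e^{−(q/2)√N}. -/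
/-!
Since `V` is symmetric, the error equals `⟪V Φ₀, R₀ V Φ₀ - R_{0,N} V Φ₀⟫`, so by
Cauchy–Schwarz it is at most `v` times the norm of the tail
`∑_{|n|>N} βₙ e^{iE₀tₙ} U(tₙ) V Φ₀`. Each term has norm at most `v M e^{-q√|n|}`, because
`U` is isometric and the phase has modulus one. Comparing with the antiderivative
`-(2/q²)(1 + q√x) e^{-q√x}` of `e^{-q√x}` bounds each one-sided tail `∑_{n>N} e^{-q√n}` by
`(2/q²)(1 + q√N) e^{-q√N} ≤ (4/q²) e^{-(q/2)√N}`.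
-/

open Real Finset

namespace Real

theorem one_add_mul_exp_neg_le (y : ℝ) : (1 + y) * exp (-y) ≤ 2 * exp (-(y / 2)) := by
  have h : 1 + y ≤ 2 * exp (y / 2) := by linarith [add_one_le_exp (y / 2)]
  calc (1 + y) * exp (-y) ≤ 2 * exp (y / 2) * exp (-y) := by gcongr
    _ = 2 * exp (-(y / 2)) := by rw [mul_assoc, ← exp_add]; ring_nf

theorem integral_exp_neg_mul_sqrt {q a b : ℝ} (hq : q ≠ 0) (ha : 0 ≤ a) (hab : a ≤ b) :
    ∫ x in a..b, exp (-q * √x) =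
      2 / q ^ 2 * ((1 + q * √a) * exp (-q * √a) - (1 + q * √b) * exp (-q * √b)) := by
  set G : ℝ → ℝ := fun x ↦ -(2 / q ^ 2) * ((1 + q * √x) * exp (-q * √x))
  have hG : ∀ x ∈ Set.Ioo a b, HasDerivAt G (exp (-q * √x)) x := by
    intro x hx
    have hx0 : 0 < x := ha.trans_lt hx.1
    have hsqrt := hasDerivAt_sqrt hx0.ne'
    have := (((hsqrt.const_mul q).const_add 1).mul (hsqrt.const_mul (-q)).exp).const_mul
      (-(2 / q ^ 2))
    refine (this : HasDerivAt G _ x).congr_deriv ?_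
    have : √x ≠ 0 := by positivity
    field_simp
    ring
  rw [intervalIntegral.integral_eq_sub_of_hasDerivAt_of_le hab (by fun_prop) hG
    (by apply Continuous.intervalIntegrable; fun_prop)]
  ring

theorem integral_exp_neg_mul_sqrt_le {q a b : ℝ} (hq : 0 < q) (ha : 0 ≤ a) (hab : a ≤ b) :
    ∫ x in a..b, exp (-q * √x) ≤ 4 / q ^ 2 * exp (-(q / 2) * √a) := by
  rw [integral_exp_neg_mul_sqrt hq.ne' ha hab]
  have hb : 0 ≤ (1 + q * √b) * exp (-q * √b) := by positivity
  have := one_add_mul_exp_neg_le (q * √a)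
  calc 2 / q ^ 2 * ((1 + q * √a) * exp (-q * √a) - (1 + q * √b) * exp (-q * √b))
      ≤ 2 / q ^ 2 * (2 * exp (-(q * √a / 2))) := by
        gcongr
        rw [neg_mul]
        linarith
    _ = 4 / q ^ 2 * exp (-(q / 2) * √a) := by ring_nf

theorem sum_range_exp_neg_mul_sqrt_le {q a : ℝ} (hq : 0 < q) (ha : 0 ≤ a) (K : ℕ) :
    ∑ k ∈ range K, exp (-q * √(a + ↑(k + 1))) ≤ 4 / q ^ 2 * exp (-(q / 2) * √a) := by
  have hanti : AntitoneOn (fun x ↦ exp (-q * √x)) (Set.Icc a (a + K)) := by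
    intro x _ y _ hxy
    simp only [exp_le_exp, neg_mul, neg_le_neg_iff]
    gcongr
  exact (hanti.sum_le_integral).trans
    (integral_exp_neg_mul_sqrt_le hq ha (by simp))

theorem summable_exp_neg_mul_sqrt_add {q a : ℝ} (hq : 0 < q) (ha : 0 ≤ a) :
    Summable fun k : ℕ ↦ exp (-q * √(a + ↑(k + 1))) :=
  summable_of_sum_range_le (fun _ ↦ (exp_pos _).le) (sum_range_exp_neg_mul_sqrt_le hq ha)

theorem tsum_exp_neg_mul_sqrt_add_le {q a : ℝ} (hq : 0 < q) (ha : 0 ≤ a) :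
    ∑' k : ℕ, exp (-q * √(a + ↑(k + 1))) ≤ 4 / q ^ 2 * exp (-(q / 2) * √a) :=
  tsum_le_of_sum_range_le (fun _ ↦ (exp_pos _).le) (sum_range_exp_neg_mul_sqrt_le hq ha)

end Real

theorem hasSum_ite_le_of_hasSum_nat_add {G : Type*} [AddCommGroup G] [TopologicalSpace G]
    [IsTopologicalAddGroup G] {g : ℕ → G} {a : G} (N : ℕ) (hg : HasSum (fun k ↦ g (N + (k + 1))) a) :
    HasSum (fun k ↦ if k ≤ N then 0 else g k) a := by
  rw [← hasSum_nat_add_iff' (N + 1)]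
  have hhead : ∑ k ∈ range (N + 1), (if k ≤ N then 0 else g k) = 0 :=
    sum_eq_zero fun k hk ↦ if_pos (Nat.lt_succ_iff.mp (mem_range.mp hk))
  rw [hhead, sub_zero]
  convert hg using 2 with k
  rw [if_neg (by omega)]
  congr 1
  omega

theorem norm_sub_sum_Icc_le_of_hasSum {E : Type*} [SeminormedAddCommGroup E] {f : ℤ → E}
    {s : E} {g : ℕ → ℝ} (hf : HasSum f s) (hg : Summable g) (hfg : ∀ n, ‖f n‖ ≤ g n.natAbs) (N : ℕ) :
    ‖s - ∑ n ∈ Icc (-(N : ℤ)) N, f n‖ ≤ 2 * ∑' k, g (N + (k + 1)) := by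
  set I := Icc (-(N : ℤ)) N
  have hI : ∀ n, n ∈ I ↔ n.natAbs ≤ N := by intro n; simp only [I, mem_Icc]; omega
  have htail : HasSum (Set.indicator (↑I)ᶜ f) (s - ∑ n ∈ I, f n) :=
    hasSum_subtype_iff_indicator.mp ((I.hasSum_compl_iff).mpr (by rwa [sub_add_cancel]))
  have hgN : HasSum (fun k ↦ if k ≤ N then 0 else g k) (∑' k, g (N + (k + 1))) :=
    hasSum_ite_le_of_hasSum_nat_add N <| Summable.hasSum <| by
      convert (summable_nat_add_iff (N + 1)).mpr hg using 3
      omega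
  have hbound : HasSum (fun n : ℤ ↦ if n.natAbs ≤ N then 0 else g n.natAbs)
      (∑' k, g (N + (k + 1)) + ∑' k, g (N + (k + 1))) := by
    -- the terms at `-(k + 1)` are those of `hgN` shifted by one, and its term at `0` vanishes
    have hgN' := (hasSum_nat_add_iff' 1).mpr hgN
    rw [sum_range_one, if_pos N.zero_le, sub_zero] at hgN'
    exact .of_nat_of_neg_add_one hgN hgN'
  rw [two_mul]
  refine htail.norm_le_of_bounded hbound fun n ↦ ?_
  by_cases hn : n ∈ I
  · simp [hn, (hI n).mp hn]
  · simpa [hn, (hI n).not.mp hn] using hfg n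

theorem stmt_10_general {E : Type*} [NormedAddCommGroup E] [InnerProductSpace ℂ E]
    (Φ₀ : E)
    (V R₀ : E →ₗ[ℂ] E) (U : ℝ → (E →ₗ[ℂ] E))
    (t : ℤ → ℝ) (β : ℤ → ℂ) (E₀ v M q : ℝ) (N : ℕ)
    (hVsym : V.IsSymmetric)
    (hv : ‖V Φ₀‖ ≤ v)
    (hM : 0 < M) (hq : 0 < q)
    (hβ : ∀ n : ℤ, ‖β n‖ ≤ M * Real.exp (-q * Real.sqrt |(n : ℝ)|))
    (hUiso : ∀ (s : ℝ) (x : E), ‖U s x‖ = ‖x‖)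
    (hsum : HasSum (fun n : ℤ =>
      (β n * Complex.exp (Complex.I * E₀ * t n)) • U (t n) (V Φ₀)) (R₀ (V Φ₀))) :
    ‖(inner ℂ Φ₀ (V (R₀ (V Φ₀))) : ℂ) -
      (inner ℂ Φ₀ (V (∑ n ∈ Finset.Icc (-(N : ℤ)) N,
        (β n * Complex.exp (Complex.I * E₀ * t n)) • U (t n) (V Φ₀))) : ℂ)‖ ≤
      v ^ 2 * (8 * M / q ^ 2) * Real.exp (-(q / 2) * Real.sqrt N) := by
  set f := fun n : ℤ ↦ (β n * Complex.exp (Complex.I * E₀ * t n)) • U (t n) (V Φ₀)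
  have hv0 : 0 ≤ v := (norm_nonneg _).trans hv
  have hf : ∀ n, ‖f n‖ ≤ v * M * exp (-q * √(n.natAbs : ℝ)) := by
    intro n
    have hphase : ‖Complex.exp (Complex.I * E₀ * t n)‖ = 1 := by
      rw [mul_assoc, ← Complex.ofReal_mul, Complex.norm_exp_I_mul_ofReal]
    rw [norm_smul, norm_mul, hphase, mul_one, hUiso, Nat.cast_natAbs, Int.cast_abs]
    calc ‖β n‖ * ‖V Φ₀‖ ≤ M * exp (-q * √|(n : ℝ)|) * v :=
          mul_le_mul (hβ n) hv (norm_nonneg _) (by positivity)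
      _ = v * M * exp (-q * √|(n : ℝ)|) := by ring
  have hsummable : Summable fun k : ℕ ↦ v * M * exp (-q * √(k : ℝ)) := by
    refine .mul_left _ ((summable_nat_add_iff 1).mp ?_)
    simpa using summable_exp_neg_mul_sqrt_add hq le_rfl
  have htail : ‖R₀ (V Φ₀) - ∑ n ∈ Icc (-(N : ℤ)) N, f n‖ ≤
      v * (8 * M / q ^ 2 * exp (-(q / 2) * √N)) := by
    refine (norm_sub_sum_Icc_le_of_hasSum hsum hsummable hf N).trans ?_
    have hT := tsum_exp_neg_mul_sqrt_add_le hq N.cast_nonneg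
    push_cast at hT ⊢
    rw [tsum_mul_left]
    calc 2 * (v * M * ∑' k : ℕ, exp (-q * √(N + (k + 1))))
        ≤ 2 * (v * M * (4 / q ^ 2 * exp (-(q / 2) * √N))) := by gcongr
      _ = v * (8 * M / q ^ 2 * exp (-(q / 2) * √N)) := by ring
  calc ‖inner ℂ Φ₀ (V (R₀ (V Φ₀))) - inner ℂ Φ₀ (V (∑ n ∈ Icc (-(N : ℤ)) N, f n))‖
      = ‖inner ℂ (V Φ₀) (R₀ (V Φ₀) - ∑ n ∈ Icc (-(N : ℤ)) N, f n)‖ := by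
        rw [hVsym, map_sub, inner_sub_right]
    _ ≤ ‖V Φ₀‖ * ‖R₀ (V Φ₀) - ∑ n ∈ Icc (-(N : ℤ)) N, f n‖ := norm_inner_le_norm _ _
    _ ≤ v * (v * (8 * M / q ^ 2 * exp (-(q / 2) * √N))) := by gcongr
    _ = v ^ 2 * (8 * M / q ^ 2) * exp (-(q / 2) * √N) := by ring

theorem stmt_10 {E : Type*} [NormedAddCommGroup E] [InnerProductSpace ℂ E]
    (Φ₀ : E) (hΦ₀ : ‖Φ₀‖ = 1)
    (V R₀ : E →ₗ[ℂ] E) (U : ℝ → (E →ₗ[ℂ] E))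
    (t : ℤ → ℝ) (β : ℤ → ℂ) (E₀ v M q : ℝ) (N : ℕ) (Δ R : ℝ)
    (hΔ : 0 < Δ) (hR : Δ ≤ R)
    (ht : ∀ n : ℤ, t n = 2 * Real.pi * n / (R + Δ))
    (hVsym : V.IsSymmetric)
    (hv : ‖V Φ₀‖ ≤ v)
    (hM : 0 < M) (hq : 0 < q)
    (hβ : ∀ n : ℤ, ‖β n‖ ≤ M * Real.exp (-q * Real.sqrt |(n : ℝ)|))
    (hUiso : ∀ (s : ℝ) (x : E), ‖U s x‖ = ‖x‖)
    (hsum : HasSum (fun n : ℤ =>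
      (β n * Complex.exp (Complex.I * E₀ * t n)) • U (t n) (V Φ₀)) (R₀ (V Φ₀))) :
    ‖(inner ℂ Φ₀ (V (R₀ (V Φ₀))) : ℂ) -
      (inner ℂ Φ₀ (V (∑ n ∈ Finset.Icc (-(N : ℤ)) N,
        (β n * Complex.exp (Complex.I * E₀ * t n)) • U (t n) (V Φ₀))) : ℂ)‖ ≤
      v ^ 2 * (8 * M / q ^ 2) * Real.exp (-(q / 2) * Real.sqrt N) :=
  stmt_10_general Φ₀ V R₀ U t β E₀ v M q N hVsym hv hM hq hβ hUiso hsum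
end
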